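/- Let X be a simplicial complex with finite edge-path systole, and set r := ⌊sys X / 2⌋ − 1. Then every metric ball B(x, r) ⊆ V(X) is inessential, and r is the maximum integer with this property; that is, the homotopy triviality radius of X equals ⌊sys X / 2⌋ − 1. -/

import Mathlib

/-- An abstract simplicial complex on vertex type `V`: a downward-closed family of
nonempty finite sets of vertices containing all singletons. -/
structure SComplex (V : Type) where
  faces : Set (Finset V)
  nonempty_of_mem : ∀ s ∈ faces, s.Nonempty
  down_closed : ∀ s ∈ faces, ∀ t ⊆ s, t.Nonempty → t ∈ faces
  singleton_mem : ∀ v : V, {v} ∈ faces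

variable {V : Type} [DecidableEq V]

/-- The 1-skeleton of a simplicial complex, as a simple graph on the vertices. -/
def SComplex.graph (X : SComplex V) : SimpleGraph V where
  Adj u v := u ≠ v ∧ ({u, v} : Finset V) ∈ X.faces
  symm := ⟨fun u v h => ⟨h.1.symm, Finset.pair_comm u v ▸ h.2⟩⟩
  loopless := ⟨fun v h => h.1 rfl⟩

/-- Combinatorial (edge-path) homotopy rel endpoints between edge-walks in a simplicial
complex: the equivalence generated by removing backtracks and by replacing two sides
of a 2-face by the third side.  Two walks are edge-homotopic iff the corresponding
paths in the geometric realization are homotopic rel endpoints. -/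
inductive SComplex.EdgeHomotopic (X : SComplex V) :
    ∀ {u v : V}, X.graph.Walk u v → X.graph.Walk u v → Prop
  | refl {u v : V} (p : X.graph.Walk u v) : EdgeHomotopic X p p
  | symm {u v : V} {p q : X.graph.Walk u v} : EdgeHomotopic X p q → EdgeHomotopic X q p
  | trans {u v : V} {p q r : X.graph.Walk u v} :
      EdgeHomotopic X p q → EdgeHomotopic X q r → EdgeHomotopic X p r
  | cons {u v w : V} (h : X.graph.Adj u v) {p q : X.graph.Walk v w} :
      EdgeHomotopic X p q →
      EdgeHomotopic X (SimpleGraph.Walk.cons h p) (SimpleGraph.Walk.cons h q)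
  | backtrack {u v w : V} (h : X.graph.Adj u v) (p : X.graph.Walk u w) :
      EdgeHomotopic X (SimpleGraph.Walk.cons h (SimpleGraph.Walk.cons h.symm p)) p
  | triangle {u v w z : V} (huv : X.graph.Adj u v) (hvw : X.graph.Adj v w)
      (huw : X.graph.Adj u w) (hface : ({u, v, w} : Finset V) ∈ X.faces)
      (p : X.graph.Walk w z) :
      EdgeHomotopic X (SimpleGraph.Walk.cons huv (SimpleGraph.Walk.cons hvw p))
        (SimpleGraph.Walk.cons huw p)

/-- A closed edge-path is null-homotopic if it is edge-homotopic to the constant path. -/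
def SComplex.NullHomotopic (X : SComplex V) {x : V} (p : X.graph.Walk x x) : Prop :=
  X.EdgeHomotopic p SimpleGraph.Walk.nil

/-- The edge-path systole: the least length of a closed edge-path that is not
null-homotopic (so every closed edge-path of length `< sys X` is null-homotopic,
and `sys X` is the largest such integer); it is `+∞` if every closed edge-path
is null-homotopic (e.g. if `X` is simply connected). -/
noncomputable def SComplex.sys (X : SComplex V) : ℕ∞ :=
  sInf {n : ℕ∞ | ∃ (x : V) (p : X.graph.Walk x x), ¬ X.NullHomotopic p ∧ (p.length : ℕ∞) = n}

/-- A set `Y` of vertices is inessential if every closed edge-path all of whose vertices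
lie in `Y` (equivalently, every loop in a connected component of the induced subcomplex
`⟨Y⟩`) is null-homotopic in `X`;  this says exactly that for every connected component
`C` of `⟨Y⟩` and every connected component `D` of `X` the map `π₁(C) → π₁(D)` is trivial. -/
def SComplex.Inessential (X : SComplex V) (Y : Set V) : Prop :=
  ∀ (x : V) (p : X.graph.Walk x x), (∀ v ∈ p.support, v ∈ Y) → X.NullHomotopic p

/-- `X` is combinatorially `n`-essential if its vertex set cannot be partitioned into
`n` or fewer inessential sets. -/
def SComplex.CombEssential (X : SComplex V) (n : ℕ) : Prop :=
  ¬ ∃ P : Fin n → Set V, (∀ v, ∃ i, v ∈ P i) ∧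
      (∀ i j, i ≠ j → Disjoint (P i) (P j)) ∧ ∀ i, X.Inessential (P i)

/-- The combinatorial metric ball `B(x,i)`: vertices at edge-distance at most `i` from `x`. -/
def SComplex.ball (X : SComplex V) (x : V) (i : ℕ) : Set V :=
  {y | ∃ p : X.graph.Walk x y, p.length ≤ i}

/-- `r` is the homotopy triviality radius of `X`: every ball of radius `r` is
inessential, and `r` is the largest integer with this property. -/
def SComplex.HomotopyTrivRadius (X : SComplex V) (r : ℕ) : Prop :=
  (∀ x, X.Inessential (X.ball x r)) ∧
    ∀ r' : ℕ, (∀ x, X.Inessential (X.ball x r')) → r' ≤ r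

open SimpleGraph.Walk in
theorem SComplex.EdgeHomotopic.append_right {X : SComplex V} {u v : V}
    {p q : X.graph.Walk u v} (h : X.EdgeHomotopic p q) :
    ∀ {w : V} (t : X.graph.Walk v w), X.EdgeHomotopic (p.append t) (q.append t) := by
  induction h with
  | refl p => exact fun t => .refl _
  | symm _ ih => exact fun t => .symm (ih t)
  | trans _ _ ih1 ih2 => exact fun t => .trans (ih1 t) (ih2 t)
  | cons h _ ih => exact fun t => .cons h (ih t)
  | backtrack h p => exact fun t => .backtrack h (p.append t)
  | triangle huv hvw huw hf p => exact fun t => .triangle huv hvw huw hf (p.append t)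

open SimpleGraph.Walk in
theorem SComplex.EdgeHomotopic.append_left {X : SComplex V} {u v w : V}
    (p : X.graph.Walk u v) {q q' : X.graph.Walk v w} (h : X.EdgeHomotopic q q') :
    X.EdgeHomotopic (p.append q) (p.append q') := by
  induction p with
  | nil => exact h
  | cons had _ ih => exact .cons had (ih h)

open SimpleGraph.Walk in
theorem SComplex.append_reverse_nil {X : SComplex V} {u v : V} (p : X.graph.Walk u v) :
    X.EdgeHomotopic (p.append p.reverse) SimpleGraph.Walk.nil := by
  induction p with
  | nil => exact .refl _
  | cons h p ih =>
    rename_i a b c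
    have e : (SimpleGraph.Walk.cons h p).append (SimpleGraph.Walk.cons h p).reverse
        = SimpleGraph.Walk.cons h ((p.append p.reverse).append
            (SimpleGraph.Walk.cons h.symm SimpleGraph.Walk.nil)) := by
      rw [reverse_cons, cons_append, append_assoc]
    rw [e]
    have h1 : X.EdgeHomotopic ((p.append p.reverse).append
        (SimpleGraph.Walk.cons h.symm SimpleGraph.Walk.nil))
        (SimpleGraph.Walk.cons h.symm SimpleGraph.Walk.nil) := ih.append_right _
    exact (SComplex.EdgeHomotopic.cons h h1).trans (.backtrack h .nil)

open SimpleGraph.Walk in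
theorem SComplex.reverse_append_nil {X : SComplex V} {u v : V} (p : X.graph.Walk u v) :
    X.EdgeHomotopic (p.reverse.append p) SimpleGraph.Walk.nil := by
  have := X.append_reverse_nil p.reverse
  rwa [reverse_reverse] at this

open SimpleGraph.Walk in
theorem SComplex.EdgeHomotopic.cancel {X : SComplex V} {u v : V}
    {p q : X.graph.Walk u v}
    (h : X.EdgeHomotopic (p.append q.reverse) SimpleGraph.Walk.nil) :
    X.EdgeHomotopic p q := by
  have h1 : X.EdgeHomotopic (p.append (q.reverse.append q)) q := by
    rw [append_assoc]
    have h2 := h.append_right q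
    rwa [nil_append] at h2
  have h3 : X.EdgeHomotopic p (p.append (q.reverse.append q)) := by
    have := SComplex.EdgeHomotopic.append_left p (X.reverse_append_nil q).symm
    rwa [append_nil] at this
  exact h3.trans h1

open SimpleGraph.Walk in
/-- Any two walks between the same endpoints whose total length is less than the systole
are edge-homotopic. -/
theorem SComplex.shortHom {X : SComplex V} {s : ℕ}
    (hshort : ∀ (y : V) (p : X.graph.Walk y y), p.length < s → X.NullHomotopic p)
    {u v : V} (p q : X.graph.Walk u v) (hlen : p.length + q.length < s) :
    X.EdgeHomotopic p q := by
  refine SComplex.EdgeHomotopic.cancel (hshort u (p.append q.reverse) ?_)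
  rw [length_append, length_reverse]; exact hlen

open SimpleGraph.Walk in
theorem SComplex.key {X : SComplex V} {s : ℕ}
    (hshort : ∀ (y : V) (p : X.graph.Walk y y), p.length < s → X.NullHomotopic p)
    (x : V) (r : ℕ) (hr : 2 * r + 1 < s) :
    ∀ {a b : V} (q : X.graph.Walk a b), (∀ v ∈ q.support, v ∈ X.ball x r) →
      ∀ (γa : X.graph.Walk x a) (γb : X.graph.Walk x b),
        γa.length ≤ r → γb.length ≤ r → X.EdgeHomotopic (γa.append q) γb := by
  intro a b q
  induction q with
  | nil =>
    intro _ γa γb ha hb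
    rw [append_nil]
    exact SComplex.shortHom hshort γa γb (by omega)
  | cons h q' ih =>
    rename_i a c b
    intro hsupp γa γb ha hb
    have hc : c ∈ X.ball x r := hsupp c (by
      rw [support_cons]
      exact List.mem_cons_of_mem _ q'.start_mem_support)
    obtain ⟨γc, hγc⟩ := hc
    have h1 : X.EdgeHomotopic (γa.append (SimpleGraph.Walk.cons h SimpleGraph.Walk.nil)) γc := by
      refine SComplex.shortHom hshort _ _ ?_
      rw [length_append, length_cons, length_nil]
      omega
    have hsupp' : ∀ v ∈ q'.support, v ∈ X.ball x r := fun v hv =>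
      hsupp v (by rw [support_cons]; exact List.mem_cons_of_mem _ hv)
    have h3 : X.EdgeHomotopic (γc.append q') γb := ih hsupp' γc γb hγc hb
    have e : γa.append (SimpleGraph.Walk.cons h q')
        = (γa.append (SimpleGraph.Walk.cons h SimpleGraph.Walk.nil)).append q' := by
      rw [← append_assoc, cons_append, nil_append]
    rw [e]
    exact (h1.append_right q').trans h3

open SimpleGraph.Walk in
theorem SComplex.ball_inessential {X : SComplex V} {s : ℕ}
    (hshort : ∀ (y : V) (p : X.graph.Walk y y), p.length < s → X.NullHomotopic p)
    (x : V) (r : ℕ) (hr : 2 * r + 1 < s) : X.Inessential (X.ball x r) := by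
  intro y p hsupp
  obtain ⟨γ, hγ⟩ := hsupp y p.start_mem_support
  have h1 : X.EdgeHomotopic (γ.append p) γ :=
    SComplex.key hshort x r hr p hsupp γ γ hγ hγ
  have h2 : X.EdgeHomotopic (γ.reverse.append (γ.append p)) (γ.reverse.append γ) :=
    SComplex.EdgeHomotopic.append_left _ h1
  have h4 : γ.reverse.append (γ.append p) = (γ.reverse.append γ).append p :=
    append_assoc _ _ _
  have h5 : X.EdgeHomotopic ((γ.reverse.append γ).append p)
      (SimpleGraph.Walk.nil.append p) := (X.reverse_append_nil γ).append_right p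
  rw [nil_append] at h5
  have h6 : X.EdgeHomotopic p (γ.reverse.append γ) := by
    rw [h4] at h2
    exact (h5.symm.trans h2)
  exact h6.trans (X.reverse_append_nil γ)

/-- **Proposition (systole vs. homotopy triviality radius).**
If `X` has finite systole `s = sys X`, then with `r := ⌊s / 2⌋ - 1` every metric ball
`B(x, r)` is inessential and `r` is the maximum integer with this property; i.e. the
homotopy triviality radius of `X` equals `⌊sys X / 2⌋ - 1`. -/
theorem homotopyTrivRadius_eq_sys_div_two_sub_one {V : Type} [Fintype V] [DecidableEq V]
    (X : SComplex V) (s : ℕ) (hs : X.sys = (s : ℕ∞)) :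
    X.HomotopyTrivRadius (s / 2 - 1) := by
  classical
  set S := {n : ℕ∞ | ∃ (x : V) (p : X.graph.Walk x x),
    ¬ X.NullHomotopic p ∧ (p.length : ℕ∞) = n} with hS
  have hsS : sInf S = (s : ℕ∞) := hs
  set T := {n : ℕ | (n : ℕ∞) ∈ S} with hT
  have hTne : T.Nonempty := by
    by_contra hemp
    have hSemp : S = ∅ := by
      ext a
      simp only [Set.mem_empty_iff_false, iff_false]
      rintro ⟨x, p, hnp, hlen⟩
      exact hemp ⟨p.length, by rw [hT]; exact Set.mem_setOf.mpr ⟨x, p, hnp, rfl⟩⟩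
    rw [hSemp, sInf_empty] at hsS
    exact (ENat.top_ne_coe s) hsS
  have hmem : ((sInf T : ℕ) : ℕ∞) ∈ S := Nat.sInf_mem hTne
  have h1 : (s : ℕ∞) ≤ ((sInf T : ℕ) : ℕ∞) := hsS ▸ sInf_le hmem
  have h2 : ((sInf T : ℕ) : ℕ∞) ≤ (s : ℕ∞) := by
    rw [← hsS]
    refine le_sInf fun b hb => ?_
    obtain ⟨x, p, hnp, hlen⟩ := hb
    have hpT : p.length ∈ T := by rw [hT]; exact Set.mem_setOf.mpr ⟨x, p, hnp, rfl⟩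
    calc ((sInf T : ℕ) : ℕ∞) ≤ (p.length : ℕ∞) := by
          exact_mod_cast Nat.sInf_le hpT
      _ = b := hlen
  have hms : sInf T = s := by
    have := le_antisymm h2 h1
    exact_mod_cast this
  rw [hms] at hmem
  obtain ⟨x0, p0, hnp0, hlen0⟩ := hmem
  have hlen0' : p0.length = s := by exact_mod_cast hlen0
  -- every loop shorter than `s` is null-homotopic
  have hshort : ∀ (y : V) (p : X.graph.Walk y y), p.length < s → X.NullHomotopic p := by
    intro y p hlt
    by_contra hnn
    have hpS : ((p.length : ℕ) : ℕ∞) ∈ S := ⟨y, p, hnn, rfl⟩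
    have := hsS ▸ sInf_le hpS
    have : s ≤ p.length := by exact_mod_cast this
    omega
  -- s ≥ 2
  have hs2 : 2 ≤ s := by
    by_contra hlt
    interval_cases s
    · have : p0 = SimpleGraph.Walk.nil := by
        rwa [← SimpleGraph.Walk.nil_iff_eq_nil, ← SimpleGraph.Walk.length_eq_zero_iff]
      exact hnp0 (this ▸ SComplex.EdgeHomotopic.refl _)
    · cases p0 with
      | nil => simp at hlen0'
      | cons h q =>
        have : q.length = 0 := by
          simp only [SimpleGraph.Walk.length_cons] at hlen0'; omega
        have hv := SimpleGraph.Walk.eq_of_length_eq_zero this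
        subst hv
        exact X.graph.loopless.irrefl _ h
  constructor
  · intro x
    exact SComplex.ball_inessential hshort x (s / 2 - 1) (by omega)
  · intro r' hr'
    by_contra hcon
    have hr's : s / 2 ≤ r' := by omega
    have hsupp : ∀ v ∈ p0.support, v ∈ X.ball x0 r' := by
      intro v hv
      obtain ⟨q, t, hqt⟩ := SimpleGraph.Walk.mem_support_iff_exists_append.mp hv
      have hlsum : q.length + t.length = s := by
        rw [← hlen0', hqt, SimpleGraph.Walk.length_append]
      by_cases hq : q.length ≤ r'
      · exact ⟨q, hq⟩
      · refine ⟨t.reverse, ?_⟩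
        rw [SimpleGraph.Walk.length_reverse]
        omega
    exact hnp0 (hr' x0 x0 p0 hsupp)
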